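/- Let H be a square-free simple graph and let P = v₀v₁…v_k (k ≥ 1) be a path in H. Let J_P be the caterpillar graph with vertices {y, u₁,…,u_{k−1}, z, w₁,…,w_{k−1}}, where y u₁ … u_{k−1} z is a path and u_j is additionally adjacent to w_j for each j. Then for any vertex a ∈ Γ_H(v₀) \ {v₁} and any homomorphism σ : J_P → H satisfying σ(y) = a and σ(w_j) = v_j for all j ∈ [k−1], it holds that σ(u_j) = v_{j−1} for all j ∈ [k−1]. -/

import Mathlib

/-- Rigidity of caterpillar gadgets: in a square-free graph `H`, for a path
`v 0, …, v k`, any homomorphism of the caterpillar gadget sending `y` to a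
neighbour `a ≠ v 1` of `v 0` (here the image of the path `y u₁ … u_{k-1} z` is
encoded by `u`, with `u 0 = a`, and `u j` adjacent to the pinned vertex `v j`)
must send each `u j` to `v (j-1)`. -/
theorem stmt_11 {V : Type*} (H : SimpleGraph V)
    (hsf : ¬ ∃ a b c d : V, a ≠ b ∧ a ≠ c ∧ a ≠ d ∧ b ≠ c ∧ b ≠ d ∧ c ≠ d ∧
      H.Adj a b ∧ H.Adj b c ∧ H.Adj c d ∧ H.Adj d a)
    {k : ℕ} (hk : 1 ≤ k) (v : ℕ → V)
    (hvinj : ∀ i j, i ≤ k → j ≤ k → v i = v j → i = j)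
    (hvadj : ∀ j, j < k → H.Adj (v j) (v (j + 1)))
    (a : V) (ha : H.Adj (v 0) a) (hav : a ≠ v 1)
    (u : ℕ → V) (hu0 : u 0 = a)
    (huadj : ∀ j, j < k → H.Adj (u j) (u (j + 1)))
    (hup : ∀ j, 1 ≤ j → j ≤ k - 1 → H.Adj (u j) (v j)) :
    ∀ j, 1 ≤ j → j ≤ k - 1 → u j = v (j - 1) := by
  -- common neighbour uniqueness
  have common : ∀ x y b c : V, x ≠ y → H.Adj x b → H.Adj y b → H.Adj x c →
      H.Adj y c → b = c := by
    intro x y b c hxy hxb hyb hxc hyc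
    by_contra hbc
    exact hsf ⟨x, b, y, c, hxb.ne, hxy, (hxc.symm).ne', hyb.ne', hbc,
      hyc.ne, hxb, hyb.symm, hyc, hxc.symm⟩
  intro j
  induction j with
  | zero => intro h; omega
  | succ n ih =>
    intro _ hle
    rcases Nat.eq_zero_or_pos n with hn | hn
    · -- base case j = 1
      subst hn
      have h1k : 1 ≤ k - 1 := hle
      have h1 : H.Adj (u 1) (v 1) := hup 1 le_rfl hle
      have h0 : H.Adj (u 0) (u 1) := huadj 0 (by omega)
      rw [hu0] at h0
      have hv01 : H.Adj (v 0) (v 1) := hvadj 0 (by omega)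
      exact common a (v 1) (u 1) (v 0) hav h0 (h1.symm) (ha.symm) (hv01.symm)
    · -- inductive step
      have hprev : u n = v (n - 1) := ih hn (by omega)
      have hadj : H.Adj (u n) (u (n + 1)) := huadj n (by omega)
      rw [hprev] at hadj
      have hup1 : H.Adj (u (n + 1)) (v (n + 1)) := hup (n + 1) (by omega) hle
      have e1 : H.Adj (v (n - 1)) (v n) := by
        have := hvadj (n - 1) (by omega)
        rwa [Nat.sub_add_cancel hn] at this
      have e2 : H.Adj (v n) (v (n + 1)) := hvadj n (by omega)
      have hne : v (n - 1) ≠ v (n + 1) := by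
        intro h
        have := hvinj (n - 1) (n + 1) (by omega) (by omega) h
        omega
      have := common (v (n - 1)) (v (n + 1)) (u (n + 1)) (v n) hne hadj
        (hup1.symm) e1 (e2.symm)
      simpa using this
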